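/- Let a ≥ 1 and b ≥ 2 be integers, and define Θ = {x ∈ Λ^{a+b} : σ(x) > b·x_{a+b} and 2·x_a ≥ x_{a+b}}. For Lebesgue-almost every x ∈ Λ^{a+b} with σ(x) > b·x_{a+b}, there exists an integer k ≥ 0 such that T_{a,b}^k(x) ∈ Θ. -/

import Mathlib

open MeasureTheory Filter Topology

def Lambda (n : ℕ) : Set (Fin n → ℝ) := {x | (∀ i, 0 ≤ x i) ∧ Monotone x}

noncomputable def subVec (a b : ℕ) (x : Fin (a + b) → ℝ) : Fin (a + b) → ℝ :=
  fun j => if (j : ℕ) < a then x j else x j - x ⟨a - 1, by have := j.isLt; omega⟩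

noncomputable def Tab (a b : ℕ) (x : Fin (a + b) → ℝ) : Fin (a + b) → ℝ :=
  subVec a b x ∘ Tuple.sort (subVec a b x)

namespace Stmt16

lemma ite_sum (a b : ℕ) (c d : ℝ) :
    ∑ j : Fin (a + b), (if (j : ℕ) < a then c else d) = a * c + b * d := by
  rw [Fin.sum_univ_eq_sum_range (fun j => if j < a then c else d)]
  rw [Finset.range_eq_Ico, ← Finset.sum_Ico_consecutive _ (Nat.zero_le a) (Nat.le_add_right a b)]
  have h1 : ∀ j ∈ Finset.Ico 0 a, (if j < a then c else d) = c := by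
    intro j hj; rw [Finset.mem_Ico] at hj; simp [hj.2]
  have h2 : ∀ j ∈ Finset.Ico a (a + b), (if j < a then c else d) = d := by
    intro j hj; rw [Finset.mem_Ico] at hj; simp [Nat.not_lt.2 hj.1]
  rw [Finset.sum_congr rfl h1, Finset.sum_congr rfl h2, Finset.sum_const, Finset.sum_const,
    Nat.card_Ico, Nat.card_Ico]
  simp

variable {a b : ℕ}

lemma tab_mem (ha : 1 ≤ a) {y : Fin (a + b) → ℝ} (hy : y ∈ Lambda (a + b)) :
    Tab a b y ∈ Lambda (a + b) := by
  have hnn : ∀ j, 0 ≤ subVec a b y j := by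
    intro j
    unfold subVec
    split
    · exact hy.1 j
    · next h =>
      have : y ⟨a - 1, by have := j.isLt; omega⟩ ≤ y j := by
        apply hy.2; rw [Fin.le_def]; simp; omega
      linarith
  exact ⟨fun i => hnn _, Tuple.monotone_sort (subVec a b y)⟩

lemma tab_sum (ha : 1 ≤ a) {y : Fin (a + b) → ℝ} (h1 : a - 1 < a + b) :
    ∑ i, Tab a b y i = ∑ i, y i - b * y ⟨a - 1, h1⟩ := by
  have : ∑ i, Tab a b y i = ∑ i, subVec a b y i :=
    Equiv.sum_comp (Tuple.sort (subVec a b y)) (subVec a b y)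
  rw [this]
  have : ∀ j : Fin (a + b), subVec a b y j
      = y j - (if (j : ℕ) < a then (0:ℝ) else y ⟨a - 1, h1⟩) := by
    intro j; unfold subVec; split <;> simp
  rw [Finset.sum_congr rfl fun j _ => this j, Finset.sum_sub_distrib, ite_sum]
  ring

lemma tab_max (ha : 1 ≤ a) (hb : 1 ≤ b) {y : Fin (a + b) → ℝ} (hy : y ∈ Lambda (a + b))
    (h1 : a - 1 < a + b) (h2 : a + b - 1 < a + b)
    (hsep : 2 * y ⟨a - 1, h1⟩ ≤ y ⟨a + b - 1, h2⟩) :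
    Tab a b y ⟨a + b - 1, h2⟩ = y ⟨a + b - 1, h2⟩ - y ⟨a - 1, h1⟩ := by
  set m := y ⟨a - 1, h1⟩ with hm
  set M := y ⟨a + b - 1, h2⟩ with hM
  have hub : ∀ j, subVec a b y j ≤ M - m := by
    intro j
    unfold subVec
    split
    · next h =>
      have h3 : y j ≤ m := by apply hy.2; rw [Fin.le_def]; simp; omega
      linarith
    · next h =>
      have h3 : y j ≤ M := by apply hy.2; rw [Fin.le_def]; simp; omega
      have h4 : (⟨a - 1, by have := j.isLt; omega⟩ : Fin (a + b)) = ⟨a - 1, h1⟩ := rfl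
      rw [h4]; linarith
  have hlast : ∀ i : Fin (a + b), i ≤ ⟨a + b - 1, h2⟩ := by
    intro i; rw [Fin.le_def]; show (i : ℕ) ≤ a + b - 1; have := i.isLt; omega
  apply le_antisymm
  · exact hub _
  · have hv : subVec a b y ⟨a + b - 1, h2⟩ = M - m := by
      unfold subVec
      have : ¬ (a + b - 1 < a) := by omega
      simp only [this, if_false]; rfl
    set σ := Tuple.sort (subVec a b y) with hσ
    have : subVec a b y ⟨a + b - 1, h2⟩ = Tab a b y (σ.symm ⟨a + b - 1, h2⟩) := by
      show _ = subVec a b y (σ (σ.symm _)); rw [Equiv.apply_symm_apply]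
    rw [hv] at this
    rw [this]
    exact Tuple.monotone_sort (subVec a b y) (hlast _)

lemma sum_le (ha : 1 ≤ a) {y : Fin (a + b) → ℝ} (hy : y ∈ Lambda (a + b))
    (h1 : a - 1 < a + b) (h2 : a + b - 1 < a + b) :
    ∑ i, y i ≤ a * y ⟨a - 1, h1⟩ + b * y ⟨a + b - 1, h2⟩ := by
  rw [← ite_sum a b]
  apply Finset.sum_le_sum
  intro i _
  split
  · next h => apply hy.2; rw [Fin.le_def]; simp; omega
  · next h => apply hy.2; rw [Fin.le_def]; simp; have := i.isLt; omega

end Stmt16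

theorem statement16 (a b : ℕ) (ha : 1 ≤ a) (hb : 2 ≤ b) :
    ∀ᵐ x : Fin (a + b) → ℝ,
      (x ∈ Lambda (a + b) ∧ (b : ℝ) * x ⟨a + b - 1, by omega⟩ < ∑ i, x i) →
      ∃ k : ℕ,
        (Tab a b)^[k] x ∈ Lambda (a + b) ∧
        (b : ℝ) * (Tab a b)^[k] x ⟨a + b - 1, by omega⟩ < ∑ i, (Tab a b)^[k] x i ∧
        (Tab a b)^[k] x ⟨a + b - 1, by omega⟩ ≤ 2 * (Tab a b)^[k] x ⟨a - 1, by omega⟩ := by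
  apply ae_of_all
  rintro x ⟨hx, hσ⟩
  by_contra hcon
  push_neg at hcon
  have h1 : a - 1 < a + b := by omega
  have h2 : a + b - 1 < a + b := by omega
  set y : ℕ → Fin (a + b) → ℝ := fun k => (Tab a b)^[k] x with hy
  set M : ℕ → ℝ := fun k => y k ⟨a + b - 1, h2⟩ with hM
  set m : ℕ → ℝ := fun k => y k ⟨a - 1, h1⟩ with hm
  set S : ℕ → ℝ := fun k => ∑ i, y k i with hS
  set δ : ℝ := S 0 - b * M 0 with hδ
  have hδpos : 0 < δ := by
    simp only [hδ, hS, hM, hy, Function.iterate_zero_apply]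
    linarith [hσ]
  set c : ℝ := b * (δ / a) with hc
  have hcpos : 0 < c := by
    apply mul_pos
    · exact_mod_cast Nat.lt_of_lt_of_le Nat.zero_lt_two hb
    · apply div_pos hδpos; exact_mod_cast ha
  -- main induction
  have key : ∀ k, y k ∈ Lambda (a + b) ∧ S k = δ + b * M k ∧ S k ≤ S 0 - k * c := by
    intro k
    induction k with
    | zero => refine ⟨hx, by simp [hδ], by simp⟩
    | succ n ih =>
      obtain ⟨hmem, heq, hle⟩ := ih
      have hQ : (b : ℝ) * M n < S n := by rw [heq]; linarith
      have hR : 2 * m n < M n := hcon n hmem hQ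
      have hstep : y (n + 1) = Tab a b (y n) := by
        simp only [hy, Function.iterate_succ_apply']
      have hmem' : y (n + 1) ∈ Lambda (a + b) := by
        rw [hstep]; exact Stmt16.tab_mem ha hmem
      have hsum' : S (n + 1) = S n - b * m n := by
        simp only [hS, hstep]; exact Stmt16.tab_sum ha h1
      have hmax' : M (n + 1) = M n - m n := by
        simp only [hM, hstep]
        exact Stmt16.tab_max ha (by omega) hmem h1 h2 (by linarith)
      -- lower bound on m n
      have hmlb : δ / a ≤ m n := by
        have h5 : S n ≤ (a : ℝ) * m n + b * M n := Stmt16.sum_le ha hmem h1 h2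
        have hane : (0:ℝ) < a := by exact_mod_cast ha
        rw [div_le_iff₀ hane]
        nlinarith [heq]
      refine ⟨hmem', ?_, ?_⟩
      · rw [hsum', hmax', heq]; ring
      · have : (b : ℝ) * (δ / a) ≤ b * m n := by
          apply mul_le_mul_of_nonneg_left hmlb
          positivity
        rw [hsum']
        push_cast
        rw [hc] at *
        calc S n - b * m n ≤ (S 0 - n * (b * (δ / a))) - b * (δ / a) := by linarith
          _ = S 0 - (n + 1) * (b * (δ / a)) := by ring
  -- contradiction: S k ≥ 0 but goes to -∞
  obtain ⟨k, hk⟩ := exists_nat_gt (S 0 / c)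
  obtain ⟨hmem, -, hle⟩ := key k
  have hSnn : 0 ≤ S k := Finset.sum_nonneg fun i _ => hmem.1 i
  have : S 0 < k * c := (div_lt_iff₀ hcpos).mp hk
  linarith
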